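/- For positive integers d, n, a, the number of partitions with perimeter n into d-distinct parts all ≥ a is at most the number of partitions with perimeter n+1 into d-distinct parts all ≥ a. -/

import Mathlib

/-- A partition: a nonempty, nonincreasing list of positive integers. -/
def IsPartition (l : List ℕ) : Prop :=
  l ≠ [] ∧ l.Pairwise (· ≥ ·) ∧ ∀ x ∈ l, 0 < x

/-- Perimeter: (largest part) + (number of parts) - 1. -/
def perimeter (l : List ℕ) : ℕ := l.headI + l.length - 1

/-- d-distinct: consecutive parts differ by at least d. -/
def DDistinct (d : ℕ) (l : List ℕ) : Prop := l.Chain' (fun x y => y + d ≤ x)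

theorem stmt13 (d n a : ℕ) (hd : 0 < d) (hn : 0 < n) (ha : 0 < a) :
    Nat.card {l : List ℕ // IsPartition l ∧ perimeter l = n ∧ DDistinct d l ∧ ∀ x ∈ l, a ≤ x}
      ≤ Nat.card {l : List ℕ // IsPartition l ∧ perimeter l = n + 1 ∧ DDistinct d l ∧
          ∀ x ∈ l, a ≤ x} := by
  set T := {l : List ℕ // IsPartition l ∧ perimeter l = n + 1 ∧ DDistinct d l ∧
      ∀ x ∈ l, a ≤ x} with hT
  -- T is finite: each list has length ≤ n+1 and entries ≤ n+1
  have hbound : ∀ l : T, l.1.length ≤ n + 1 ∧ ∀ x ∈ l.1, x < n + 2 := by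
    rintro ⟨l, ⟨hne, hsort, hpos⟩, hper, _, _⟩
    obtain ⟨h, t, rfl⟩ := List.exists_cons_of_ne_nil hne
    have hh : 0 < h := hpos h (by simp)
    simp only [perimeter, List.headI_cons, List.length_cons] at hper
    constructor
    · simp only [List.length_cons]; omega
    · intro x hx
      rcases List.mem_cons.mp hx with rfl | hx
      · omega
      · have := (List.pairwise_cons.mp hsort).1 x hx
        omega
  have hfin : Finite T := by
    have hF : {l : List (Fin (n + 2)) | l.length ≤ n + 1}.Finite :=
      List.finite_length_le _ _
    have : Finite {l : List (Fin (n + 2)) // l.length ≤ n + 1} := hF.to_subtype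
    apply Finite.of_injective (β := {l : List (Fin (n + 2)) // l.length ≤ n + 1})
      (f := fun l => ⟨l.1.map (fun x => ⟨x % (n + 2), Nat.mod_lt _ (by omega)⟩),
        by simpa using (hbound l).1⟩)
    rintro ⟨l₁, hl₁⟩ ⟨l₂, hl₂⟩ hl
    simp only [Subtype.mk.injEq] at hl ⊢
    have key : ∀ l : T, l.1.map (fun x => x % (n + 2)) = l.1 := by
      intro l
      calc l.1.map (fun x => x % (n + 2))
          = l.1.map id := List.map_congr_left (fun x hx => Nat.mod_eq_of_lt ((hbound l).2 x hx))
        _ = l.1 := List.map_id _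
    have := congrArg (List.map Fin.val) hl
    simp only [List.map_map] at this
    have e1 := key ⟨l₁, hl₁⟩
    have e2 := key ⟨l₂, hl₂⟩
    simp only at e1 e2
    exact Subtype.ext <| calc l₁ = l₁.map (fun x => x % (n + 2)) := e1.symm
      _ = l₂.map (fun x => x % (n + 2)) := this
      _ = l₂ := e2
  -- the injection: add 1 to the head
  have hmem : ∀ l : {l : List ℕ // IsPartition l ∧ perimeter l = n ∧ DDistinct d l ∧
      ∀ x ∈ l, a ≤ x}, IsPartition ((l.1.headI + 1) :: l.1.tail) ∧
      perimeter ((l.1.headI + 1) :: l.1.tail) = n + 1 ∧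
      DDistinct d ((l.1.headI + 1) :: l.1.tail) ∧ ∀ x ∈ (l.1.headI + 1) :: l.1.tail, a ≤ x := by
    rintro ⟨l, ⟨hne, hsort, hpos⟩, hper, hdd, hge⟩
    obtain ⟨h, t, rfl⟩ := List.exists_cons_of_ne_nil hne
    simp only [List.headI_cons, List.tail_cons]
    obtain ⟨hth, hts⟩ := List.pairwise_cons.mp hsort
    refine ⟨⟨by simp, ?_, ?_⟩, ?_, ?_, ?_⟩
    · exact List.pairwise_cons.mpr ⟨fun x hx => le_trans (hth x hx) (by omega), hts⟩
    · intro x hx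
      rcases List.mem_cons.mp hx with rfl | hx
      · omega
      · exact hpos x (List.mem_cons_of_mem _ hx)
    · simp only [perimeter, List.headI_cons, List.length_cons] at hper ⊢
      omega
    · rcases t with _ | ⟨b, t⟩
      · exact List.isChain_singleton _
      · refine List.isChain_cons_cons.mpr ⟨?_, (List.isChain_cons_cons.mp hdd).2⟩
        have := (List.isChain_cons_cons.mp hdd).1
        omega
    · intro x hx
      rcases List.mem_cons.mp hx with rfl | hx
      · have := hge h (by simp); omega
      · exact hge x (List.mem_cons_of_mem _ hx)
  apply Nat.card_le_card_of_injective
    (f := fun l => (⟨(l.1.headI + 1) :: l.1.tail, hmem l⟩ : T))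
  · rintro ⟨l₁, ⟨hne₁, _, _⟩, _⟩ ⟨l₂, ⟨hne₂, _, _⟩, _⟩ hl
    simp only [Subtype.mk.injEq] at hl
    apply Subtype.ext
    simp only
    obtain ⟨h₁, t₁, rfl⟩ := List.exists_cons_of_ne_nil hne₁
    obtain ⟨h₂, t₂, rfl⟩ := List.exists_cons_of_ne_nil hne₂
    simp only [List.headI_cons, List.tail_cons, List.cons.injEq] at hl
    simp only [List.cons.injEq]
    exact ⟨by omega, hl.2⟩
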